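/- Let K1 = K(α,β) be a segment in ℂ with α, β > 0 real (so K1 ⊆ (0,∞)), and let K2 be a convex subset of ℂ. Then the Minkowski product K1K2 is convex. -/

import Mathlib

open Set

theorem stmt_11 (α β : ℝ) (hα : 0 < α) (hβ : 0 < β) (K2 : Set ℂ) (hK2 : Convex ℝ K2) :
    Convex ℝ (Set.image2 (· * ·) (segment ℝ (α : ℂ) (β : ℂ)) K2) := by
  have hseg : segment ℝ (α : ℂ) (β : ℂ) = (fun x : ℝ => (x : ℂ)) '' segment ℝ α β := by
    have := image_segment ℝ ((Complex.ofRealCLM : ℝ →L[ℝ] ℂ).toLinearMap.toAffineMap) α β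
    simpa using this.symm
  rintro p ⟨s, hs, u, hu, rfl⟩ q ⟨t, ht, v, hv, rfl⟩ a b ha hb hab
  rw [hseg] at hs ht
  obtain ⟨s', hs', rfl⟩ := hs
  obtain ⟨t', ht', rfl⟩ := ht
  have hpos : ∀ x ∈ segment ℝ α β, 0 < x := fun x hx =>
    (convex_Ioi (0:ℝ)).segment_subset hα hβ hx
  have hs0 : 0 < s' := hpos _ hs'
  have ht0 : 0 < t' := hpos _ ht'
  set w := a * s' + b * t' with hw_def
  have hw : 0 < w := by
    rcases eq_or_lt_of_le ha with h | h
    · have hb1 : b = 1 := by linarith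
      simp [hw_def, ← h, hb1, ht0]
    · nlinarith [mul_pos h hs0, mul_nonneg hb ht0.le]
  have hwseg : w ∈ segment ℝ α β := (convex_segment α β) hs' ht' ha hb hab
  refine ⟨(w : ℂ), by rw [hseg]; exact ⟨w, hwseg, rfl⟩,
    (a * s' / w) • u + (b * t' / w) • v, ?_, ?_⟩
  · exact hK2 hu hv (by positivity) (by positivity)
      (by field_simp; exact hw_def.symm)
  · simp only [smul_eq_mul, Complex.real_smul, smul_add]
    push_cast
    have hwc : (a : ℂ) * s' + b * t' ≠ 0 := by
      rw [show (a : ℂ) * s' + b * t' = ((a * s' + b * t' : ℝ) : ℂ) by push_cast; ring]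
      exact_mod_cast hw.ne'
    rw [show ((a * s' + b * t' : ℝ) : ℂ) = ↑a * ↑s' + ↑b * ↑t' from by push_cast; ring]
    field_simp
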